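/- The rational solutions α of the equation 1296·(α² + 3)³ = 389017·(α² − 1)² are exactly α ∈ {17, −17, 5/4, −5/4, 7/9, −7/9}. -/
import Mathlib

/-- The rational solutions of `1296(α² + 3)³ = 389017(α² − 1)²` are exactly
`α ∈ {17, −17, 5/4, −5/4, 7/9, −7/9}`. -/
theorem rational_solutions_caseB (α : ℚ) :
    1296 * (α ^ 2 + 3) ^ 3 = 389017 * (α ^ 2 - 1) ^ 2 ↔
      α = 17 ∨ α = -17 ∨ α = 5 / 4 ∨ α = -5 / 4 ∨ α = 7 / 9 ∨ α = -7 / 9 := by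
  constructor
  · intro h
    have h2 : (α - 17) * (α + 17) * (4 * α - 5) * (4 * α + 5) * (9 * α - 7) * (9 * α + 7) = 0 := by
      linear_combination h
    rcases mul_eq_zero.mp h2 with h3 | h3
    rotate_left
    · right; right; right; right; right; linarith
    rcases mul_eq_zero.mp h3 with h4 | h4
    rotate_left
    · right; right; right; right; left; linarith
    rcases mul_eq_zero.mp h4 with h5 | h5
    rotate_left
    · right; right; right; left; linarith
    rcases mul_eq_zero.mp h5 with h6 | h6
    rotate_left
    · right; right; left; linarith
    rcases mul_eq_zero.mp h6 with h7 | h7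
    · left; linarith
    · right; left; linarith
  · rintro (h | h | h | h | h | h) <;> subst h <;> norm_num
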